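/- Let A be a cocommutative Hopf algebra over a field of characteristic 0, let B : A → A be an idempotent Hopf algebra endomorphism (B ∘ B = B, an algebra and coalgebra map), and define B' : A → A by B'(x) = x₁ B(S(x₂)). Then the following are equivalent: (a) B' is an idempotent Hopf algebra endomorphism of A and B(x₁)B'(x₂) = x for all x ∈ A (i.e. (B, B') is a projection homomorphism pair); (b) the images of B and B' commute, i.e. B(x)B'(y) = B'(y)B(x) for all x, y ∈ A. -/

import Mathlib

open TensorProduct LinearMap

noncomputable section

universe u

section FrozenDefs
variable {K H : Type u} [Field K] [CharZero K] [Ring H] [HopfAlgebra K H]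

/-- The antipode of `H` as a `K`-linear map. -/
def aS (K H : Type u) [Field K] [Ring H] [HopfAlgebra K H] : H →ₗ[K] H :=
  HopfAlgebra.antipode K

/-- Convolution-type composite: `conv f g x = f x₁ * g x₂` in Sweedler notation,
where the source may be any coalgebra `C`. -/
def conv {C : Type u} [AddCommGroup C] [Module K C] [Coalgebra K C]
    (f g : C →ₗ[K] H) : C →ₗ[K] H :=
  LinearMap.mul' K H ∘ₗ TensorProduct.map f g ∘ₗ Coalgebra.comul

/-- `wrap f g h (a ⊗ₜ c) = f a₁ * (g c * h a₂)` in Sweedler notation. -/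
def wrap {C : Type u} [AddCommGroup C] [Module K C] [Coalgebra K C]
    (f : C →ₗ[K] H) (g : H →ₗ[K] H) (h : C →ₗ[K] H) : C ⊗[K] H →ₗ[K] H :=
  LinearMap.mul' K H ∘ₗ
    TensorProduct.map f
      (LinearMap.mul' K H ∘ₗ TensorProduct.map g h ∘ₗ (TensorProduct.comm K C H).toLinearMap) ∘ₗ
    (TensorProduct.assoc K C C H).toLinearMap ∘ₗ
    TensorProduct.map Coalgebra.comul LinearMap.id

/-- The descendent product: `mulB B (x ⊗ₜ y) = B x₁ * (y * (S (B x₂) * x₃))`,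
i.e. `x *_B y = B(x₁) y S(B(x₂)) x₃` in Sweedler notation. -/
def mulB (B : H →ₗ[K] H) : H ⊗[K] H →ₗ[K] H :=
  wrap B LinearMap.id (conv (aS K H ∘ₗ B) LinearMap.id)

/-- `Bt B x = x₁ * B (S x₂)`, i.e. the operator `B̃`. -/
def Bt (B : H →ₗ[K] H) : H →ₗ[K] H := conv LinearMap.id (B ∘ₗ aS K H)

/-- `SB B x = S(B x₁) * (S x₂ * B x₃)`, the antipode `S_B` of the descendent Hopf algebra. -/
def SB (B : H →ₗ[K] H) : H →ₗ[K] H := conv (aS K H ∘ₗ B) (conv (aS K H) B)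

/-- `H` is cocommutative. -/
def IsCocomm (K H : Type u) [Field K] [Ring H] [HopfAlgebra K H] : Prop :=
  ∀ x : H, (TensorProduct.comm K H H) (Coalgebra.comul x) = Coalgebra.comul x

/-- `B` is a Rota–Baxter operator of weight `-1` on `H`: it is a coalgebra map and
`B x * B y = B (B(x₁) y S(B(x₂)) x₃)` in Sweedler notation. -/
def IsRotaBaxter (B : H →ₗ[K] H) : Prop :=
  (Coalgebra.comul ∘ₗ B = TensorProduct.map B B ∘ₗ Coalgebra.comul) ∧
  (Coalgebra.counit ∘ₗ B = Coalgebra.counit) ∧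
  ∀ x y : H, B x * B y = B (mulB B (x ⊗ₜ[K] y))


end FrozenDefs

section MyDev19
open Coalgebra
variable {K : Type u} [Field K]

section CW
variable {C A : Type u} [AddCommGroup C] [Module K C] [Coalgebra K C] [Ring A] [Algebra K A]

/-- generalized convolution -/
def cw (f g : C →ₗ[K] A) : C →ₗ[K] A :=
  LinearMap.mul' K A ∘ₗ TensorProduct.map f g ∘ₗ Coalgebra.comul

/-- convolution unit -/
def cu : C →ₗ[K] A := Algebra.linearMap K A ∘ₗ Coalgebra.counit

lemma cw_apply (f g : C →ₗ[K] A) (a : C) (r : Coalgebra.Repr K a (C × C)) :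
    cw f g a = ∑ i ∈ r.index, f (r.left i) * g (r.right i) := by
  simp only [cw, LinearMap.comp_apply, ← r.eq, map_sum, TensorProduct.map_tmul,
    LinearMap.mul'_apply]

lemma cu_apply (a : C) : cu (K := K) (A := A) a = Coalgebra.counit (R := K) a • (1 : A) := by
  simp [cu, Algebra.smul_def]

lemma sum_counit_smul (a : C) (r : Coalgebra.Repr K a (C × C)) :
    ∑ i ∈ r.index, Coalgebra.counit (R := K) (r.right i) • (r.left i) = a := by
  have h := congrArg (TensorProduct.rid K C) (Coalgebra.sum_tmul_counit_eq r)
  simp only [map_sum, TensorProduct.rid_tmul] at h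
  rw [one_smul] at h; exact h

lemma counit_sum_smul (a : C) (r : Coalgebra.Repr K a (C × C)) :
    ∑ i ∈ r.index, Coalgebra.counit (R := K) (r.left i) • (r.right i) = a := by
  have h := congrArg (TensorProduct.lid K C) (Coalgebra.sum_counit_tmul_eq r)
  simp only [map_sum, TensorProduct.lid_tmul] at h
  rw [one_smul] at h; exact h

lemma cw_cu_right (f : C →ₗ[K] A) : cw f cu = f := by
  ext a
  let r := ℛ K a
  rw [cw_apply f cu a r]
  calc ∑ i ∈ r.index, f (r.left i) * cu (r.right i)
      = ∑ i ∈ r.index, f (Coalgebra.counit (R := K) (r.right i) • r.left i) := by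
        refine Finset.sum_congr rfl fun i _ => ?_
        rw [cu_apply, mul_smul_comm, mul_one, map_smul]
    _ = f a := by rw [← map_sum, sum_counit_smul a r]

lemma cw_cu_left (f : C →ₗ[K] A) : cw cu f = f := by
  ext a
  let r := ℛ K a
  rw [cw_apply cu f a r]
  calc ∑ i ∈ r.index, cu (r.left i) * f (r.right i)
      = ∑ i ∈ r.index, f (Coalgebra.counit (R := K) (r.left i) • r.right i) := by
        refine Finset.sum_congr rfl fun i _ => ?_
        rw [cu_apply, smul_mul_assoc, one_mul, map_smul]
    _ = f a := by rw [← map_sum, counit_sum_smul a r]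

lemma cw_assoc (f g h : C →ₗ[K] A) : cw (cw f g) h = cw f (cw g h) := by
  ext a
  let r := ℛ K a
  let r₁ : (i : (C × C)) → Coalgebra.Repr K (r.left i) (C × C) := fun i => ℛ K (r.left i)
  let r₂ : (i : (C × C)) → Coalgebra.Repr K (r.right i) (C × C) := fun i => ℛ K (r.right i)
  have key := Coalgebra.sum_tmul_tmul_eq r r₁ r₂
  have h2 := congrArg (LinearMap.mul' K A ∘ₗ
    TensorProduct.map f (LinearMap.mul' K A ∘ₗ TensorProduct.map g h)) key
  simp only [map_sum, LinearMap.comp_apply, TensorProduct.map_tmul, LinearMap.mul'_apply] at h2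
  rw [cw_apply (cw f g) h a r, cw_apply f (cw g h) a r]
  calc ∑ i ∈ r.index, cw f g (r.left i) * h (r.right i)
      = ∑ i ∈ r.index, ∑ j ∈ (r₁ i).index,
          f ((r₁ i).left j) * (g ((r₁ i).right j) * h (r.right i)) := by
        refine Finset.sum_congr rfl fun i _ => ?_
        rw [cw_apply f g _ (r₁ i), Finset.sum_mul]
        exact Finset.sum_congr rfl fun j _ => mul_assoc _ _ _
    _ = ∑ i ∈ r.index, ∑ j ∈ (r₂ i).index,
          f (r.left i) * (g ((r₂ i).left j) * h ((r₂ i).right j)) := h2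
    _ = ∑ i ∈ r.index, f (r.left i) * cw g h (r.right i) := by
        refine Finset.sum_congr rfl fun i _ => ?_
        rw [cw_apply g h _ (r₂ i), Finset.mul_sum]

/-- convolution-inverse uniqueness -/
lemma cw_unique {f g g' : C →ₗ[K] A} (h1 : cw f g = cu) (h2 : cw g' f = cu) : g' = g := by
  have := cw_assoc g' f g
  rw [h2, cw_cu_left, h1, cw_cu_right] at this
  exact this.symm

section CWcomp
variable {C' A' : Type u} [AddCommGroup C'] [Module K C'] [Coalgebra K C']
  [Ring A'] [Algebra K A']

lemma cw_comp (f g : C →ₗ[K] A) (φ : C' →ₗ[K] C)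
    (hφ : Coalgebra.comul ∘ₗ φ = TensorProduct.map φ φ ∘ₗ Coalgebra.comul) :
    (cw f g) ∘ₗ φ = cw (f ∘ₗ φ) (g ∘ₗ φ) := by
  unfold cw
  rw [LinearMap.comp_assoc, LinearMap.comp_assoc, hφ, TensorProduct.map_comp]
  simp only [LinearMap.comp_assoc]

lemma cu_comp (φ : C' →ₗ[K] C) (hφ : Coalgebra.counit ∘ₗ φ = Coalgebra.counit) :
    (cu (K := K) (A := A)) ∘ₗ φ = cu := by
  unfold cu; rw [LinearMap.comp_assoc, hφ]

lemma comp_cw (f g : C →ₗ[K] A) (ψ : A →ₗ[K] A') (hψ : ∀ x y : A, ψ (x * y) = ψ x * ψ y) :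
    ψ ∘ₗ cw f g = cw (ψ ∘ₗ f) (ψ ∘ₗ g) := by
  ext a
  let r := ℛ K a
  rw [LinearMap.comp_apply, cw_apply f g a r, map_sum, cw_apply (ψ ∘ₗ f) (ψ ∘ₗ g) a r]
  exact Finset.sum_congr rfl fun i _ => hψ _ _

lemma comp_cu (ψ : A →ₗ[K] A') (hψ : ψ 1 = 1) :
    ψ ∘ₗ (cu (K := K) (C := C) (A := A)) = cu (K := K) (C := C) (A := A') := by
  ext a
  simp only [LinearMap.comp_apply, cu_apply, map_smul, hψ]

end CWcomp
end CW

section Hopf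
variable {H : Type u} [Ring H] [HopfAlgebra K H]

local notation "S" => (HopfAlgebra.antipode (R := K) (A := H))

lemma cw_S_id : cw (K := K) S LinearMap.id = cu := HopfAlgebra.mul_antipode_rTensor_comul

lemma cw_id_S : cw (K := K) LinearMap.id S = cu := HopfAlgebra.mul_antipode_lTensor_comul

lemma S_one : S (1 : H) = (1 : H) := by
  have h := HopfAlgebra.mul_antipode_rTensor_comul_apply (R := K) (A := H) (1 : H)
  simpa [Bialgebra.comul_one, Algebra.TensorProduct.one_def] using h

lemma cu_eq_counit : (cu (K := K) (C := H) (A := K)) = Coalgebra.counit := by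
  ext a; simp [cu_apply, smul_eq_mul]

lemma counit_S : (Coalgebra.counit (R := K) (A := H)) ∘ₗ S = Coalgebra.counit := by
  have h1 : (Coalgebra.counit (R := K) (A := H)) ∘ₗ cw (K := K) S LinearMap.id =
      cw (Coalgebra.counit ∘ₗ S) (Coalgebra.counit ∘ₗ LinearMap.id) :=
    comp_cw _ _ _ (by intro x y; simp)
  rw [cw_S_id, LinearMap.comp_id, comp_cu Coalgebra.counit Bialgebra.counit_one,
    cu_eq_counit] at h1
  calc (Coalgebra.counit (R := K) (A := H)) ∘ₗ S
      = cw (Coalgebra.counit ∘ₗ S) cu := (cw_cu_right _).symm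
    _ = Coalgebra.counit := by rw [cu_eq_counit, ← h1]

local notation "M" => (LinearMap.mul' K H)

lemma comul2_tmul (x y : H) : Coalgebra.comul (R := K) (x ⊗ₜ[K] y) =
    TensorProduct.tensorTensorTensorComm K H H H H
      (Coalgebra.comul (R := K) x ⊗ₜ Coalgebra.comul (R := K) y) := by
  rw [TensorProduct.comul_tmul]; rfl

lemma counit2_tmul (x y : H) : Coalgebra.counit (R := K) (x ⊗ₜ[K] y) =
    Coalgebra.counit (R := K) x * Coalgebra.counit (R := K) y := by
  rw [TensorProduct.counit_tmul, smul_eq_mul, mul_comm]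

lemma mul'_comul : Coalgebra.comul (R := K) ∘ₗ (M) =
    TensorProduct.map (M) (M) ∘ₗ Coalgebra.comul := by
  apply TensorProduct.ext'
  intro x y
  simp only [LinearMap.comp_apply, LinearMap.mul'_apply, Bialgebra.comul_mul]
  rw [comul2_tmul]
  obtain ⟨sx, hx⟩ := TensorProduct.exists_finset (Coalgebra.comul (R := K) x)
  obtain ⟨sy, hy⟩ := TensorProduct.exists_finset (Coalgebra.comul (R := K) y)
  rw [hx, hy, Finset.sum_mul_sum]
  simp only [TensorProduct.sum_tmul, TensorProduct.tmul_sum, map_sum,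
    LinearEquiv.coe_coe, TensorProduct.tensorTensorTensorComm_tmul, TensorProduct.map_tmul,
    LinearMap.mul'_apply, Algebra.TensorProduct.tmul_mul_tmul]
  rw [Finset.sum_comm]

lemma mul'_counit : Coalgebra.counit (R := K) ∘ₗ (M) = Coalgebra.counit := by
  apply TensorProduct.ext'
  intro x y
  simp only [LinearMap.comp_apply, LinearMap.mul'_apply, Bialgebra.counit_mul, counit2_tmul]

lemma cw_M_SM : cw (K := K) (M) (S ∘ₗ M) = cu := by
  have h := cw_comp (LinearMap.id : H →ₗ[K] H) S (M) mul'_comul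
  rw [cw_id_S, cu_comp (M) mul'_counit] at h
  simpa using h.symm

lemma cw_G_M : cw (K := K) ((M) ∘ₗ TensorProduct.map S S ∘ₗ (TensorProduct.comm K H H).toLinearMap)
    (M) = cu := by
  apply TensorProduct.ext'
  intro x y
  let rx := ℛ K x
  let ry := ℛ K y
  have hcom : Coalgebra.comul (R := K) (x ⊗ₜ[K] y) =
      ∑ i ∈ rx.index, ∑ j ∈ ry.index,
        (rx.left i ⊗ₜ[K] ry.left j) ⊗ₜ[K] (rx.right i ⊗ₜ[K] ry.right j) := by
    rw [comul2_tmul, ← rx.eq, ← ry.eq]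
    simp only [TensorProduct.sum_tmul, TensorProduct.tmul_sum, map_sum,
      TensorProduct.tensorTensorTensorComm_tmul]
    rw [Finset.sum_comm]
  simp only [cw, LinearMap.comp_apply]
  rw [hcom]
  simp only [map_sum, TensorProduct.map_tmul, LinearMap.comp_apply, LinearEquiv.coe_coe,
    TensorProduct.comm_tmul, LinearMap.mul'_apply]
  calc ∑ i ∈ rx.index, ∑ j ∈ ry.index,
        S (ry.left j) * S (rx.left i) * (rx.right i * ry.right j)
      = ∑ j ∈ ry.index, ∑ i ∈ rx.index,
        S (ry.left j) * (S (rx.left i) * rx.right i * ry.right j) := by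
        rw [Finset.sum_comm]
        refine Finset.sum_congr rfl fun j _ => Finset.sum_congr rfl fun i _ => ?_
        rw [mul_assoc, ← mul_assoc (S (rx.left i)) (rx.right i) (ry.right j)]
    _ = ∑ j ∈ ry.index, S (ry.left j) *
          ((∑ i ∈ rx.index, S (rx.left i) * rx.right i) * ry.right j) := by
        refine Finset.sum_congr rfl fun j _ => ?_
        rw [← Finset.mul_sum, ← Finset.sum_mul]
    _ = ∑ j ∈ ry.index, Coalgebra.counit (R := K) x • (S (ry.left j) * ry.right j) := by
        refine Finset.sum_congr rfl fun j _ => ?_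
        rw [HopfAlgebra.sum_antipode_mul_eq_algebraMap_counit rx, Algebra.algebraMap_eq_smul_one, smul_mul_assoc,
          one_mul, mul_smul_comm]
    _ = cu (x ⊗ₜ[K] y) := by
        rw [← Finset.smul_sum, HopfAlgebra.sum_antipode_mul_eq_algebraMap_counit ry, cu_apply, counit2_tmul,
          Algebra.algebraMap_eq_smul_one, smul_smul]

lemma S_mul_map : S ∘ₗ (M) =
    (M) ∘ₗ TensorProduct.map S S ∘ₗ (TensorProduct.comm K H H).toLinearMap :=
  (cw_unique cw_M_SM cw_G_M).symm

lemma S_mul (x y : H) : S (x * y) = S y * S x := by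
  have := congrArg (fun f => f (x ⊗ₜ[K] y)) S_mul_map
  simpa using this

/-- coassociativity for sums over representations, mapped by a linear map -/
lemma coassoc_sum {W : Type u} [AddCommGroup W] [Module K W] (x : H) (r : Coalgebra.Repr K x (H × H))
    (rL : ∀ i : (H × H), Coalgebra.Repr K (r.left i) (H × H))
    (rR : ∀ i : (H × H), Coalgebra.Repr K (r.right i) (H × H))
    (Φ : H ⊗[K] (H ⊗[K] H) →ₗ[K] W) :
    ∑ i ∈ r.index, ∑ j ∈ (rL i).index,
        Φ ((rL i).left j ⊗ₜ[K] ((rL i).right j ⊗ₜ[K] r.right i))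
      = ∑ i ∈ r.index, ∑ k ∈ (rR i).index,
        Φ (r.left i ⊗ₜ[K] ((rR i).left k ⊗ₜ[K] (rR i).right k)) := by
  have h := congrArg Φ (Coalgebra.sum_tmul_tmul_eq r rL rR)
  simpa only [map_sum] using h

section Cocomm

/-- the swapped representation, using cocommutativity -/
def reprSwap (hcc : ∀ x : H, (TensorProduct.comm K H H) (Coalgebra.comul (R := K) x)
    = Coalgebra.comul (R := K) x) {a : H} (r : Coalgebra.Repr K a (H × H)) : Coalgebra.Repr K a (H × H) where
  index := r.index
  left := r.right
  right := r.left
  eq := by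
    calc ∑ i ∈ r.index, r.right i ⊗ₜ[K] r.left i
        = (TensorProduct.comm K H H) (∑ i ∈ r.index, r.left i ⊗ₜ[K] r.right i) := by
          simp [map_sum]
      _ = Coalgebra.comul a := by rw [r.eq, hcc a]

lemma repr_swap_sum (hcc : ∀ x : H, (TensorProduct.comm K H H) (Coalgebra.comul (R := K) x)
    = Coalgebra.comul (R := K) x)
    {W : Type u} [AddCommGroup W] [Module K W] {a : H} (r : Coalgebra.Repr K a (H × H))
    (Φ : H ⊗[K] H →ₗ[K] W) :
    ∑ i ∈ r.index, Φ (r.left i ⊗ₜ[K] r.right i)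
      = ∑ i ∈ r.index, Φ (r.right i ⊗ₜ[K] r.left i) := by
  have h1 := congrArg Φ r.eq
  have h2 := congrArg Φ ((reprSwap hcc r).eq)
  simp only [map_sum] at h1 h2
  exact h1.trans h2.symm

/-- P4: the antipode is an involution (cocommutative case) -/
lemma S_S (hcc : ∀ x : H, (TensorProduct.comm K H H) (Coalgebra.comul (R := K) x)
    = Coalgebra.comul (R := K) x) : S ∘ₗ S = (LinearMap.id : H →ₗ[K] H) := by
  refine cw_unique cw_S_id ?_
  ext x
  let r := ℛ K x
  rw [cw_apply _ _ x r]
  simp only [LinearMap.comp_apply]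
  have h1 : ∀ i ∈ r.index, S (S (r.left i)) * S (r.right i) = S (r.right i * S (r.left i)) :=
    fun i _ => (S_mul _ _).symm
  rw [Finset.sum_congr rfl h1, ← map_sum]
  have h2 : ∑ i ∈ r.index, r.right i * S (r.left i)
      = algebraMap K H (Coalgebra.counit (R := K) x) := by
    have h3 := repr_swap_sum hcc r ((M) ∘ₗ TensorProduct.map LinearMap.id S)
    simp only [LinearMap.comp_apply, TensorProduct.map_tmul, LinearMap.mul'_apply,
      LinearMap.id_coe, id_eq] at h3
    rw [← h3, HopfAlgebra.sum_mul_antipode_eq_algebraMap_counit r]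
  rw [h2, Algebra.algebraMap_eq_smul_one, map_smul, S_one, cu_apply]

/-- P3: comul commutes with the antipode (cocommutative case) -/
lemma comul_S (hcc : ∀ x : H, (TensorProduct.comm K H H) (Coalgebra.comul (R := K) x)
    = Coalgebra.comul (R := K) x) : Coalgebra.comul (R := K) ∘ₗ S = TensorProduct.map S S ∘ₗ Coalgebra.comul := by
  have h1 : cw (K := K) Coalgebra.comul (Coalgebra.comul ∘ₗ S) = cu := by
    have h := comp_cw (LinearMap.id : H →ₗ[K] H) S (Coalgebra.comul (R := K) (A := H))
      (fun a b => Bialgebra.comul_mul a b)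
    have hco : Coalgebra.comul (R := K) (1 : H) = 1 := Bialgebra.comul_one
    rw [cw_id_S, comp_cu (Coalgebra.comul (R := K) (A := H)) hco] at h
    simpa using h.symm
  refine (cw_unique h1 ?_).symm
  ext x
  let r := ℛ K x
  let rL : ∀ i : (H × H), Coalgebra.Repr K (r.left i) (H × H) := fun i => ℛ K (r.left i)
  let rR : ∀ i : (H × H), Coalgebra.Repr K (r.right i) (H × H) := fun i => ℛ K (r.right i)
  let rP : ∀ i k, Coalgebra.Repr K ((rR i).left k) (H × H) := fun i k => ℛ K ((rR i).left k)
  -- Θ (c ⊗ (d ⊗ b)) = (S d ⊗ S c) * comul b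
  set Θ : H ⊗[K] (H ⊗[K] H) →ₗ[K] (H ⊗[K] H) :=
    LinearMap.mul' K (H ⊗[K] H) ∘ₗ
      TensorProduct.map (TensorProduct.map S S ∘ₗ (TensorProduct.comm K H H).toLinearMap)
        Coalgebra.comul ∘ₗ (TensorProduct.assoc K H H H).symm.toLinearMap with hΘ
  have hΘapp : ∀ (c d b : H), Θ (c ⊗ₜ[K] (d ⊗ₜ[K] b))
      = (S d ⊗ₜ[K] S c) * Coalgebra.comul (R := K) b := by
    intro c d b
    simp [hΘ, LinearMap.comp_apply, TensorProduct.assoc_symm_tmul, TensorProduct.map_tmul,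
      LinearMap.mul'_apply]
  -- step 1-2: expand and use the swapped representations at each left node
  have step12 : cw (K := K) (TensorProduct.map S S ∘ₗ Coalgebra.comul) Coalgebra.comul x
      = ∑ i ∈ r.index, ∑ j ∈ (rL i).index,
        Θ ((rL i).left j ⊗ₜ[K] ((rL i).right j ⊗ₜ[K] r.right i)) := by
    rw [cw_apply _ _ x r]
    refine Finset.sum_congr rfl fun i _ => ?_
    have hswap : Coalgebra.comul (R := K) (r.left i)
        = ∑ j ∈ (rL i).index, (rL i).right j ⊗ₜ[K] (rL i).left j := ((reprSwap hcc (rL i)).eq).symm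
    rw [LinearMap.comp_apply, hswap]
    simp only [map_sum, TensorProduct.map_tmul, hΘapp]
    rw [Finset.sum_mul]
  rw [step12, coassoc_sum x r rL rR Θ]
  -- sub-representations of the second level
  let rP : ∀ (i : (H × H)) (k : (H × H)), Coalgebra.Repr K ((rR i).right k) (H × H) :=
    fun i k => ℛ K ((rR i).right k)
  let rQ : ∀ (i : (H × H)) (k : (H × H)), Coalgebra.Repr K ((rR i).left k) (H × H) :=
    fun i k => ℛ K ((rR i).left k)
  -- Ξ i (u ⊗ (v ⊗ w)) = (S u * v) ⊗ (S aᵢ * w)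
  let Ξ : (H × H) → (H ⊗[K] (H ⊗[K] H) →ₗ[K] H ⊗[K] H) := fun i =>
    TensorProduct.map ((M) ∘ₗ TensorProduct.map S LinearMap.id)
        (LinearMap.mulLeft K (S (r.left i))) ∘ₗ (TensorProduct.assoc K H H H).symm.toLinearMap
  have hΞapp : ∀ (i : (H × H)) (u v w : H), Ξ i (u ⊗ₜ[K] (v ⊗ₜ[K] w))
      = (S u * v) ⊗ₜ[K] (S (r.left i) * w) := by
    intro i u v w
    simp [Ξ, LinearMap.comp_apply, TensorProduct.assoc_symm_tmul, TensorProduct.map_tmul,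
      LinearMap.mul'_apply, LinearMap.mulLeft_apply]
  calc ∑ i ∈ r.index, ∑ k ∈ (rR i).index,
        Θ (r.left i ⊗ₜ[K] ((rR i).left k ⊗ₜ[K] (rR i).right k))
      = ∑ i ∈ r.index, ∑ k ∈ (rR i).index, ∑ l ∈ (rP i k).index,
          Ξ i ((rR i).left k ⊗ₜ[K] ((rP i k).left l ⊗ₜ[K] (rP i k).right l)) := by
        refine Finset.sum_congr rfl fun i _ => Finset.sum_congr rfl fun k _ => ?_
        rw [hΘapp, ← (rP i k).eq, Finset.mul_sum]
        exact Finset.sum_congr rfl fun l _ => by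
          rw [Algebra.TensorProduct.tmul_mul_tmul, hΞapp]
    _ = ∑ i ∈ r.index, ∑ k ∈ (rR i).index, ∑ l ∈ (rQ i k).index,
          Ξ i ((rQ i k).left l ⊗ₜ[K] ((rQ i k).right l ⊗ₜ[K] (rR i).right k)) := by
        exact Finset.sum_congr rfl fun i _ =>
          (coassoc_sum (r.right i) (rR i) (rQ i) (rP i) (Ξ i)).symm
    _ = ∑ i ∈ r.index, ∑ k ∈ (rR i).index,
          (algebraMap K H (Coalgebra.counit (R := K) ((rR i).left k)))
            ⊗ₜ[K] (S (r.left i) * (rR i).right k) := by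
        refine Finset.sum_congr rfl fun i _ => Finset.sum_congr rfl fun k _ => ?_
        calc ∑ l ∈ (rQ i k).index,
              Ξ i ((rQ i k).left l ⊗ₜ[K] ((rQ i k).right l ⊗ₜ[K] (rR i).right k))
            = (∑ l ∈ (rQ i k).index, S ((rQ i k).left l) * (rQ i k).right l)
                ⊗ₜ[K] (S (r.left i) * (rR i).right k) := by
              rw [TensorProduct.sum_tmul]
              exact Finset.sum_congr rfl fun l _ => hΞapp i _ _ _
          _ = _ := by rw [HopfAlgebra.sum_antipode_mul_eq_algebraMap_counit (rQ i k)]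
    _ = ∑ i ∈ r.index, (1 : H) ⊗ₜ[K] (S (r.left i) * r.right i) := by
        refine Finset.sum_congr rfl fun i _ => ?_
        let ζ : H →ₗ[K] H ⊗[K] H :=
          TensorProduct.mk K H H 1 ∘ₗ LinearMap.mulLeft K (S (r.left i))
        have hζ : ∀ w : H, ζ w = (1 : H) ⊗ₜ[K] (S (r.left i) * w) := fun w => rfl
        calc ∑ k ∈ (rR i).index,
              (algebraMap K H (Coalgebra.counit (R := K) ((rR i).left k)))
                ⊗ₜ[K] (S (r.left i) * (rR i).right k)
            = ∑ k ∈ (rR i).index,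
                Coalgebra.counit (R := K) ((rR i).left k) • ζ ((rR i).right k) := by
              refine Finset.sum_congr rfl fun k _ => ?_
              rw [hζ, Algebra.algebraMap_eq_smul_one, ← TensorProduct.smul_tmul']
          _ = ζ (∑ k ∈ (rR i).index,
                Coalgebra.counit (R := K) ((rR i).left k) • (rR i).right k) := by
              rw [map_sum]
              exact Finset.sum_congr rfl fun k _ => (map_smul ζ _ _).symm
          _ = (1 : H) ⊗ₜ[K] (S (r.left i) * r.right i) := by
              rw [counit_sum_smul _ (rR i), hζ]
    _ = cu x := by
        rw [← TensorProduct.tmul_sum, HopfAlgebra.sum_antipode_mul_eq_algebraMap_counit r, cu_apply,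
          Algebra.TensorProduct.one_def, Algebra.algebraMap_eq_smul_one,
          TensorProduct.tmul_smul]

/-- P12 swaps the first two factors of a triple tensor -/
def P12 : H ⊗[K] (H ⊗[K] H) →ₗ[K] H ⊗[K] (H ⊗[K] H) :=
  (TensorProduct.assoc K H H H).toLinearMap ∘ₗ
    ((TensorProduct.comm K H H).toLinearMap.rTensor H) ∘ₗ
    (TensorProduct.assoc K H H H).symm.toLinearMap

lemma P12_apply (u v w : H) : (P12 (K := K)) (u ⊗ₜ[K] (v ⊗ₜ[K] w)) = v ⊗ₜ[K] (u ⊗ₜ[K] w) := by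
  simp [P12, TensorProduct.assoc_symm_tmul, TensorProduct.assoc_tmul]

/-- M0: the triple coproduct is invariant under swapping the first two legs -/
lemma triple_swap12 (hcc : ∀ x : H, (TensorProduct.comm K H H) (Coalgebra.comul (R := K) x)
    = Coalgebra.comul (R := K) x)
    {W : Type u} [AddCommGroup W] [Module K W] (b : H) (rb : Coalgebra.Repr K b (H × H))
    (rF : ∀ k : (H × H), Coalgebra.Repr K (rb.right k) (H × H)) (Φ : H ⊗[K] (H ⊗[K] H) →ₗ[K] W) :
    ∑ k ∈ rb.index, ∑ l ∈ (rF k).index,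
        Φ (rb.left k ⊗ₜ[K] ((rF k).left l ⊗ₜ[K] (rF k).right l))
      = ∑ k ∈ rb.index, ∑ l ∈ (rF k).index,
        Φ ((rF k).left l ⊗ₜ[K] (rb.left k ⊗ₜ[K] (rF k).right l)) := by
  let rPq : ∀ k : (H × H), Coalgebra.Repr K (rb.left k) (H × H) := fun k => ℛ K (rb.left k)
  have h2 := coassoc_sum b rb rPq rF (Φ ∘ₗ P12)
  have h3 := coassoc_sum b rb (fun k => reprSwap hcc (rPq k)) rF Φ
  simp only [LinearMap.comp_apply, P12_apply] at h2
  calc ∑ k ∈ rb.index, ∑ l ∈ (rF k).index,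
        Φ (rb.left k ⊗ₜ[K] ((rF k).left l ⊗ₜ[K] (rF k).right l))
      = ∑ k ∈ rb.index, ∑ j ∈ (rPq k).index,
        Φ ((rPq k).right j ⊗ₜ[K] ((rPq k).left j ⊗ₜ[K] rb.right k)) := h3.symm
    _ = ∑ k ∈ rb.index, ∑ l ∈ (rF k).index,
        Φ ((rF k).left l ⊗ₜ[K] (rb.left k ⊗ₜ[K] (rF k).right l)) := h2


/-- M1: `(Δ ⊗ Δ)(Δ x)` is invariant under the middle swap (cocommutative case) -/
lemma comul_comul_swap (hcc : ∀ x : H, (TensorProduct.comm K H H) (Coalgebra.comul (R := K) x)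
    = Coalgebra.comul (R := K) x) (x : H) (r : Coalgebra.Repr K x (H × H)) :
    TensorProduct.tensorTensorTensorComm K H H H H
        (∑ i ∈ r.index, Coalgebra.comul (R := K) (r.left i)
          ⊗ₜ[K] Coalgebra.comul (R := K) (r.right i))
      = ∑ i ∈ r.index, Coalgebra.comul (R := K) (r.left i)
          ⊗ₜ[K] Coalgebra.comul (R := K) (r.right i) := by
  let rL : ∀ i : (H × H), Coalgebra.Repr K (r.left i) (H × H) := fun i => ℛ K (r.left i)
  let rR : ∀ i : (H × H), Coalgebra.Repr K (r.right i) (H × H) := fun i => ℛ K (r.right i)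
  let rF : ∀ (i : (H × H)) (k : (H × H)), Coalgebra.Repr K ((rR i).right k) (H × H) :=
    fun i k => ℛ K ((rR i).right k)
  let Ψ₁ : H ⊗[K] (H ⊗[K] H) →ₗ[K] (H ⊗[K] H) ⊗[K] (H ⊗[K] H) :=
    (Coalgebra.comul (R := K)).lTensor (H ⊗[K] H) ∘ₗ (TensorProduct.assoc K H H H).symm.toLinearMap
  let Ψ₂ : H ⊗[K] (H ⊗[K] H) →ₗ[K] (H ⊗[K] H) ⊗[K] (H ⊗[K] H) :=
    (TensorProduct.tensorTensorTensorComm K H H H H).toLinearMap ∘ₗ Ψ₁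
  let Φ : (H × H) → (H ⊗[K] (H ⊗[K] H) →ₗ[K] (H ⊗[K] H) ⊗[K] (H ⊗[K] H)) := fun i =>
    (TensorProduct.assoc K H H (H ⊗[K] H)).symm.toLinearMap ∘ₗ
      TensorProduct.mk K H (H ⊗[K] (H ⊗[K] H)) (r.left i)
  have hΨ₁ : ∀ c d b : H, Ψ₁ (c ⊗ₜ[K] (d ⊗ₜ[K] b))
      = (c ⊗ₜ[K] d) ⊗ₜ[K] Coalgebra.comul (R := K) b := by
    intro c d b
    simp [Ψ₁, TensorProduct.assoc_symm_tmul, LinearMap.lTensor_tmul]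
  have hΨ₂ : ∀ c d b : H, Ψ₂ (c ⊗ₜ[K] (d ⊗ₜ[K] b))
      = TensorProduct.tensorTensorTensorComm K H H H H
          ((c ⊗ₜ[K] d) ⊗ₜ[K] Coalgebra.comul (R := K) b) := by
    intro c d b
    simp only [Ψ₂, LinearMap.comp_apply, hΨ₁, LinearEquiv.coe_coe]
  have hΦ : ∀ (i : (H × H)) (u v w : H), Φ i (u ⊗ₜ[K] (v ⊗ₜ[K] w))
      = (r.left i ⊗ₜ[K] u) ⊗ₜ[K] (v ⊗ₜ[K] w) := by
    intro i u v w
    simp [Φ, TensorProduct.assoc_symm_tmul]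
  calc TensorProduct.tensorTensorTensorComm K H H H H
        (∑ i ∈ r.index, Coalgebra.comul (R := K) (r.left i)
          ⊗ₜ[K] Coalgebra.comul (R := K) (r.right i))
      = ∑ i ∈ r.index, ∑ j ∈ (rL i).index,
          Ψ₂ ((rL i).left j ⊗ₜ[K] ((rL i).right j ⊗ₜ[K] r.right i)) := by
        rw [map_sum]
        refine Finset.sum_congr rfl fun i _ => ?_
        rw [← (rL i).eq, TensorProduct.sum_tmul, map_sum]
        exact Finset.sum_congr rfl fun j _ => (hΨ₂ _ _ _).symm
    _ = ∑ i ∈ r.index, ∑ k ∈ (rR i).index,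
          Ψ₂ (r.left i ⊗ₜ[K] ((rR i).left k ⊗ₜ[K] (rR i).right k)) :=
        coassoc_sum x r rL rR Ψ₂
    _ = ∑ i ∈ r.index, ∑ k ∈ (rR i).index, ∑ l ∈ (rF i k).index,
          Φ i ((rF i k).left l ⊗ₜ[K] ((rR i).left k ⊗ₜ[K] (rF i k).right l)) := by
        refine Finset.sum_congr rfl fun i _ => Finset.sum_congr rfl fun k _ => ?_
        rw [hΨ₂, ← (rF i k).eq, TensorProduct.tmul_sum, map_sum]
        exact Finset.sum_congr rfl fun l _ => by
          rw [TensorProduct.tensorTensorTensorComm_tmul, hΦ]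
    _ = ∑ i ∈ r.index, ∑ k ∈ (rR i).index, ∑ l ∈ (rF i k).index,
          Φ i ((rR i).left k ⊗ₜ[K] ((rF i k).left l ⊗ₜ[K] (rF i k).right l)) := by
        exact Finset.sum_congr rfl fun i _ =>
          (triple_swap12 hcc (r.right i) (rR i) (rF i) (Φ i)).symm
    _ = ∑ i ∈ r.index, ∑ k ∈ (rR i).index,
          Ψ₁ (r.left i ⊗ₜ[K] ((rR i).left k ⊗ₜ[K] (rR i).right k)) := by
        refine Finset.sum_congr rfl fun i _ => Finset.sum_congr rfl fun k _ => ?_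
        rw [hΨ₁, ← (rF i k).eq, TensorProduct.tmul_sum]
        exact (Finset.sum_congr rfl fun l _ => by rw [hΦ]).symm
    _ = ∑ i ∈ r.index, ∑ j ∈ (rL i).index,
          Ψ₁ ((rL i).left j ⊗ₜ[K] ((rL i).right j ⊗ₜ[K] r.right i)) :=
        (coassoc_sum x r rL rR Ψ₁).symm
    _ = ∑ i ∈ r.index, Coalgebra.comul (R := K) (r.left i)
          ⊗ₜ[K] Coalgebra.comul (R := K) (r.right i) := by
        refine Finset.sum_congr rfl fun i _ => ?_
        rw [← (rL i).eq, TensorProduct.sum_tmul]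
        exact Finset.sum_congr rfl fun j _ => by rw [hΨ₁]

end Cocomm


section Bops
variable (B : H →ₗ[K] H)

/-- the antipode commutes with a Hopf algebra endomorphism -/
lemma S_comp_B (hBmul : ∀ x y : H, B (x * y) = B x * B y) (hBone : B (1 : H) = 1)
    (hBcomul : Coalgebra.comul ∘ₗ B = TensorProduct.map B B ∘ₗ Coalgebra.comul)
    (hBcounit : Coalgebra.counit ∘ₗ B = Coalgebra.counit) :
    S ∘ₗ B = B ∘ₗ S := by
  have h1 : cw (K := K) B (B ∘ₗ S) = cu := by
    have h := comp_cw (LinearMap.id : H →ₗ[K] H) S B hBmul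
    rw [cw_id_S, comp_cu B hBone] at h
    simpa using h.symm
  have h2 : cw (K := K) (S ∘ₗ B) B = cu := by
    have h := cw_comp S (LinearMap.id : H →ₗ[K] H) B hBcomul
    rw [cw_S_id, cu_comp B hBcounit] at h
    simpa using h.symm
  exact cw_unique h1 h2

lemma BS_mul (hBmul : ∀ x y : H, B (x * y) = B x * B y) (x y : H) : (B ∘ₗ S) (x * y) = (B ∘ₗ S) y * (B ∘ₗ S) x := by
  simp only [LinearMap.comp_apply]
  rw [S_mul, hBmul]

lemma B_algebraMap (hBone : B (1 : H) = 1) (k : K) : B (algebraMap K H k) = algebraMap K H k := by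
  rw [Algebra.algebraMap_eq_smul_one, map_smul, hBone]

lemma comul_BS (hBcomul : Coalgebra.comul ∘ₗ B = TensorProduct.map B B ∘ₗ Coalgebra.comul)
    (hcc : ∀ x : H, (TensorProduct.comm K H H) (Coalgebra.comul (R := K) x)
      = Coalgebra.comul (R := K) x) :
    Coalgebra.comul (R := K) ∘ₗ (B ∘ₗ S) = TensorProduct.map (B ∘ₗ S) (B ∘ₗ S) ∘ₗ
      Coalgebra.comul := by
  calc Coalgebra.comul (R := K) ∘ₗ (B ∘ₗ S) = (Coalgebra.comul ∘ₗ B) ∘ₗ S := by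
        rw [LinearMap.comp_assoc]
    _ = TensorProduct.map B B ∘ₗ (Coalgebra.comul ∘ₗ S) := by
        rw [hBcomul, LinearMap.comp_assoc]
    _ = TensorProduct.map B B ∘ₗ TensorProduct.map S S ∘ₗ Coalgebra.comul := by
        rw [comul_S hcc]
    _ = TensorProduct.map (B ∘ₗ S) (B ∘ₗ S) ∘ₗ Coalgebra.comul := by
        rw [← LinearMap.comp_assoc, ← TensorProduct.map_comp]

lemma counit_BS (hBcounit : Coalgebra.counit ∘ₗ B = Coalgebra.counit) :
    Coalgebra.counit (R := K) ∘ₗ (B ∘ₗ S) = Coalgebra.counit := by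
  rw [← LinearMap.comp_assoc, hBcounit, counit_S]

/-- T1: `B' ⋆ B = id` -/
lemma conv_Bt_B (hBmul : ∀ x y : H, B (x * y) = B x * B y) (hBone : B (1 : H) = 1) : cw (K := K) (cw LinearMap.id (B ∘ₗ S)) B = LinearMap.id := by
  have h : cw (K := K) (B ∘ₗ S) B = cu := by
    have h := comp_cw S (LinearMap.id : H →ₗ[K] H) B hBmul
    rw [cw_S_id, comp_cu B hBone] at h
    simpa using h.symm
  rw [cw_assoc, h, cw_cu_right]

/-- T2 -/
lemma Bt_one (hBone : B (1 : H) = 1) : cw (K := K) LinearMap.id (B ∘ₗ S) (1 : H) = 1 := by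
  have h1 : Coalgebra.comul (R := K) (1 : H) = (1 : H) ⊗ₜ[K] (1 : H) := by
    rw [Bialgebra.comul_one, Algebra.TensorProduct.one_def]
  simp only [cw, LinearMap.comp_apply, h1, TensorProduct.map_tmul, LinearMap.mul'_apply,
    LinearMap.id_coe, id_eq, S_one, hBone, one_mul]

/-- T3 -/
lemma counit_Bt (hBcounit : Coalgebra.counit ∘ₗ B = Coalgebra.counit) :
    Coalgebra.counit (R := K) ∘ₗ cw LinearMap.id (B ∘ₗ S) = Coalgebra.counit := by
  have h := comp_cw (LinearMap.id : H →ₗ[K] H) (B ∘ₗ S)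
    (Coalgebra.counit (R := K) (A := H)) (fun a b => Bialgebra.counit_mul a b)
  rw [counit_BS B hBcounit] at h
  rw [h, LinearMap.comp_id, ← cu_eq_counit, cw_cu_right]


/-- T4: `B'` is a coalgebra map -/
lemma comul_Bt (hBcomul : Coalgebra.comul ∘ₗ B = TensorProduct.map B B ∘ₗ Coalgebra.comul)
    (hcc : ∀ x : H, (TensorProduct.comm K H H) (Coalgebra.comul (R := K) x)
      = Coalgebra.comul (R := K) x) :
    Coalgebra.comul (R := K) ∘ₗ cw LinearMap.id (B ∘ₗ S)
      = TensorProduct.map (cw LinearMap.id (B ∘ₗ S)) (cw LinearMap.id (B ∘ₗ S)) ∘ₗ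
        Coalgebra.comul := by
  ext x
  let r := ℛ K x
  set β : H ⊗[K] H →ₗ[K] H := (M) ∘ₗ TensorProduct.map LinearMap.id (B ∘ₗ S) with hβ
  set Φ₁ : (H ⊗[K] H) ⊗[K] (H ⊗[K] H) →ₗ[K] H ⊗[K] H :=
    LinearMap.mul' K (H ⊗[K] H) ∘ₗ
      LinearMap.lTensor (H ⊗[K] H) (TensorProduct.map (B ∘ₗ S) (B ∘ₗ S)) with hΦ₁
  have hΦ₁app : ∀ u v : H ⊗[K] H, Φ₁ (u ⊗ₜ[K] v)
      = u * TensorProduct.map (B ∘ₗ S) (B ∘ₗ S) v := by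
    intro u v
    simp [hΦ₁, LinearMap.lTensor_tmul, LinearMap.mul'_apply]
  have hmap : Φ₁ ∘ₗ (TensorProduct.tensorTensorTensorComm K H H H H).toLinearMap
      = TensorProduct.map β β := by
    apply TensorProduct.ext_fourfold'
    intro a b c d
    simp only [LinearMap.comp_apply, LinearEquiv.coe_coe,
      TensorProduct.tensorTensorTensorComm_tmul, hΦ₁app, TensorProduct.map_tmul, hβ,
      LinearMap.mul'_apply, LinearMap.id_coe, id_eq, Algebra.TensorProduct.tmul_mul_tmul]
  have hT := comul_comul_swap hcc x r
  calc Coalgebra.comul (R := K) (cw LinearMap.id (B ∘ₗ S) x)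
      = Φ₁ (∑ i ∈ r.index, Coalgebra.comul (R := K) (r.left i)
          ⊗ₜ[K] Coalgebra.comul (R := K) (r.right i)) := by
        rw [cw_apply _ _ x r, map_sum, map_sum]
        refine Finset.sum_congr rfl fun i _ => ?_
        rw [hΦ₁app, LinearMap.id_coe, id_eq, Bialgebra.comul_mul]
        congr 1
        exact congrArg (fun f => f (r.right i)) (comul_BS B hBcomul hcc)
    _ = Φ₁ (TensorProduct.tensorTensorTensorComm K H H H H
          (∑ i ∈ r.index, Coalgebra.comul (R := K) (r.left i)
            ⊗ₜ[K] Coalgebra.comul (R := K) (r.right i))) := by rw [hT]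
    _ = TensorProduct.map β β (∑ i ∈ r.index, Coalgebra.comul (R := K) (r.left i)
          ⊗ₜ[K] Coalgebra.comul (R := K) (r.right i)) := by
        rw [← hmap]; rfl
    _ = (TensorProduct.map (cw LinearMap.id (B ∘ₗ S)) (cw LinearMap.id (B ∘ₗ S)) ∘ₗ
        Coalgebra.comul) x := by
        rw [LinearMap.comp_apply, ← r.eq]
        simp only [map_sum, TensorProduct.map_tmul]
        exact Finset.sum_congr rfl fun i _ => rfl


/-- key computation: `BS(d * BS f) = B f * BS d` -/
lemma BS_mul_BS (hBmul : ∀ x y : H, B (x * y) = B x * B y)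
    (hBcomul : Coalgebra.comul ∘ₗ B = TensorProduct.map B B ∘ₗ Coalgebra.comul)
    (hBcounit : Coalgebra.counit ∘ₗ B = Coalgebra.counit)
    (hBone : B (1 : H) = 1) (hBidem : B ∘ₗ B = B)
    (hcc : ∀ x : H, (TensorProduct.comm K H H) (Coalgebra.comul (R := K) x)
      = Coalgebra.comul (R := K) x)
    (d f : H) : (B ∘ₗ S) (d * (B ∘ₗ S) f) = B f * (B ∘ₗ S) d := by
  simp only [LinearMap.comp_apply]
  rw [S_mul, hBmul]
  congr 1
  have h1 : S (B (S f)) = B (S (S f)) := congrArg (fun g => g (S f)) (S_comp_B B hBmul hBone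
    hBcomul hBcounit)
  have h2 : S (S f) = f := congrArg (fun g => g f) (S_S hcc)
  rw [h1, h2]
  exact congrArg (fun g => g f) hBidem

/-- T5: `B'` is idempotent -/
lemma Bt_idem (hBmul : ∀ x y : H, B (x * y) = B x * B y)
    (hBcomul : Coalgebra.comul ∘ₗ B = TensorProduct.map B B ∘ₗ Coalgebra.comul)
    (hBcounit : Coalgebra.counit ∘ₗ B = Coalgebra.counit)
    (hBone : B (1 : H) = 1) (hBidem : B ∘ₗ B = B)
    (hcc : ∀ x : H, (TensorProduct.comm K H H) (Coalgebra.comul (R := K) x)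
      = Coalgebra.comul (R := K) x) :
    cw (K := K) LinearMap.id (B ∘ₗ S) ∘ₗ cw LinearMap.id (B ∘ₗ S)
      = cw LinearMap.id (B ∘ₗ S) := by
  ext x
  let r := ℛ K x
  let rL : ∀ i : (H × H), Coalgebra.Repr K (r.left i) (H × H) := fun i => ℛ K (r.left i)
  let rR : ∀ i : (H × H), Coalgebra.Repr K (r.right i) (H × H) := fun i => ℛ K (r.right i)
  have hx : cw (K := K) LinearMap.id (B ∘ₗ S) x
      = ∑ i ∈ r.index, r.left i * (B ∘ₗ S) (r.right i) := by
    rw [cw_apply _ _ x r]; simp only [LinearMap.id_coe, id_eq]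
  rw [LinearMap.comp_apply, hx, map_sum]
  calc ∑ i ∈ r.index, cw LinearMap.id (B ∘ₗ S) (r.left i * (B ∘ₗ S) (r.right i))
      = ∑ i ∈ r.index, Coalgebra.counit (R := K) (r.right i) •
          cw LinearMap.id (B ∘ₗ S) (r.left i) := by
        refine Finset.sum_congr rfl fun i _ => ?_
        have hΔ : Coalgebra.comul (R := K) (r.left i * (B ∘ₗ S) (r.right i))
            = ∑ j ∈ (rL i).index, ∑ k ∈ (rR i).index,
              ((rL i).left j * (B ∘ₗ S) ((rR i).left k)) ⊗ₜ[K]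
                ((rL i).right j * (B ∘ₗ S) ((rR i).right k)) := by
          rw [Bialgebra.comul_mul]
          have h2 : Coalgebra.comul (R := K) ((B ∘ₗ S) (r.right i))
              = ∑ k ∈ (rR i).index,
                  (B ∘ₗ S) ((rR i).left k) ⊗ₜ[K] (B ∘ₗ S) ((rR i).right k) := by
            have hc := congrArg (fun g => g (r.right i)) (comul_BS B hBcomul hcc)
            simp only [LinearMap.comp_apply] at hc ⊢
            rw [hc, ← (rR i).eq]
            simp only [map_sum, TensorProduct.map_tmul, LinearMap.comp_apply]
          rw [h2, ← (rL i).eq, Finset.sum_mul_sum]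
          simp only [Algebra.TensorProduct.tmul_mul_tmul]
        rw [show cw (K := K) LinearMap.id (B ∘ₗ S) (r.left i * (B ∘ₗ S) (r.right i))
            = LinearMap.mul' K H (TensorProduct.map LinearMap.id (B ∘ₗ S)
              (Coalgebra.comul (r.left i * (B ∘ₗ S) (r.right i)))) from rfl, hΔ]
        simp only [map_sum, TensorProduct.map_tmul, LinearMap.mul'_apply, LinearMap.id_coe, id_eq]
        calc ∑ j ∈ (rL i).index, ∑ k ∈ (rR i).index,
              (rL i).left j * (B ∘ₗ S) ((rR i).left k) *
                (B ∘ₗ S) ((rL i).right j * (B ∘ₗ S) ((rR i).right k))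
            = ∑ j ∈ (rL i).index, (rL i).left j *
                ((∑ k ∈ (rR i).index, (B ∘ₗ S) ((rR i).left k) * B ((rR i).right k)) *
                  (B ∘ₗ S) ((rL i).right j)) := by
              refine Finset.sum_congr rfl fun j _ => ?_
              rw [Finset.sum_mul, Finset.mul_sum]
              refine Finset.sum_congr rfl fun k _ => ?_
              rw [BS_mul_BS B hBmul hBcomul hBcounit hBone hBidem hcc, mul_assoc,
                ← mul_assoc ((B ∘ₗ S) ((rR i).left k))]
            _ = ∑ j ∈ (rL i).index, Coalgebra.counit (R := K) (r.right i) •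
                ((rL i).left j * (B ∘ₗ S) ((rL i).right j)) := by
              refine Finset.sum_congr rfl fun j _ => ?_
              have hsum : ∑ k ∈ (rR i).index, (B ∘ₗ S) ((rR i).left k) * B ((rR i).right k)
                  = algebraMap K H (Coalgebra.counit (R := K) (r.right i)) := by
                calc ∑ k ∈ (rR i).index, (B ∘ₗ S) ((rR i).left k) * B ((rR i).right k)
                    = B (∑ k ∈ (rR i).index, S ((rR i).left k) * (rR i).right k) := by
                      rw [map_sum]
                      exact Finset.sum_congr rfl fun k _ => (hBmul _ _).symm
                  _ = _ := by rw [HopfAlgebra.sum_antipode_mul_eq_algebraMap_counit (rR i),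
                        B_algebraMap B hBone]
              rw [hsum, Algebra.algebraMap_eq_smul_one, smul_mul_assoc, one_mul, mul_smul_comm]
            _ = Coalgebra.counit (R := K) (r.right i) •
                cw LinearMap.id (B ∘ₗ S) (r.left i) := by
              rw [← Finset.smul_sum, cw_apply _ _ (r.left i) (rL i)]
              simp only [LinearMap.id_coe, id_eq]
    _ = ∑ i ∈ r.index, r.left i * (B ∘ₗ S) (r.right i) := by
        have h : ∑ i ∈ r.index, Coalgebra.counit (R := K) (r.right i) •
            cw LinearMap.id (B ∘ₗ S) (r.left i)
            = cw (K := K) LinearMap.id (B ∘ₗ S)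
              (∑ i ∈ r.index, Coalgebra.counit (R := K) (r.right i) • r.left i) := by
          rw [map_sum]
          exact Finset.sum_congr rfl fun i _ => (map_smul _ _ _).symm
        rw [h, sum_counit_smul x r, hx]


/-- T6: if the ranges of `B` and `B'` commute then `B'` is multiplicative -/
lemma Bt_mul_of_comm (hBmul : ∀ x y : H, B (x * y) = B x * B y)
    (hcomm : ∀ u v : H, B u * cw LinearMap.id (B ∘ₗ S) v
      = cw LinearMap.id (B ∘ₗ S) v * B u) (x y : H) :
    cw (K := K) LinearMap.id (B ∘ₗ S) (x * y)
      = cw LinearMap.id (B ∘ₗ S) x * cw LinearMap.id (B ∘ₗ S) y := by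
  let rx := ℛ K x
  let ry := ℛ K y
  have hΔ : Coalgebra.comul (R := K) (x * y) = ∑ i ∈ rx.index, ∑ j ∈ ry.index,
      (rx.left i * ry.left j) ⊗ₜ[K] (rx.right i * ry.right j) := by
    rw [Bialgebra.comul_mul, ← rx.eq, ← ry.eq, Finset.sum_mul_sum]
    simp only [Algebra.TensorProduct.tmul_mul_tmul]
  have hy : cw (K := K) LinearMap.id (B ∘ₗ S) y
      = ∑ j ∈ ry.index, ry.left j * (B ∘ₗ S) (ry.right j) := by
    rw [cw_apply _ _ y ry]; simp only [LinearMap.id_coe, id_eq]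
  have hx : cw (K := K) LinearMap.id (B ∘ₗ S) x
      = ∑ i ∈ rx.index, rx.left i * (B ∘ₗ S) (rx.right i) := by
    rw [cw_apply _ _ x rx]; simp only [LinearMap.id_coe, id_eq]
  calc cw (K := K) LinearMap.id (B ∘ₗ S) (x * y)
      = ∑ i ∈ rx.index, ∑ j ∈ ry.index,
          (rx.left i * ry.left j) * (B ∘ₗ S) (rx.right i * ry.right j) := by
        rw [show cw (K := K) LinearMap.id (B ∘ₗ S) (x * y)
          = LinearMap.mul' K H (TensorProduct.map LinearMap.id (B ∘ₗ S)
            (Coalgebra.comul (x * y))) from rfl, hΔ]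
        simp only [map_sum, TensorProduct.map_tmul, LinearMap.mul'_apply,
          LinearMap.id_coe, id_eq]
    _ = ∑ i ∈ rx.index, rx.left i *
          (cw LinearMap.id (B ∘ₗ S) y * (B ∘ₗ S) (rx.right i)) := by
        refine Finset.sum_congr rfl fun i _ => ?_
        rw [hy, Finset.sum_mul, Finset.mul_sum]
        refine Finset.sum_congr rfl fun j _ => ?_
        rw [BS_mul B hBmul, mul_assoc, ← mul_assoc (ry.left j)]
    _ = ∑ i ∈ rx.index, (rx.left i * (B ∘ₗ S) (rx.right i)) *
          cw LinearMap.id (B ∘ₗ S) y := by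
        refine Finset.sum_congr rfl fun i _ => ?_
        have h := (hcomm (S (rx.right i)) y).symm
        simp only [LinearMap.comp_apply]
        rw [h, ← mul_assoc]
    _ = cw LinearMap.id (B ∘ₗ S) x * cw LinearMap.id (B ∘ₗ S) y := by
        rw [← Finset.sum_mul, ← hx]

/-- T7: if the ranges commute, the pair identity `B(x₁) B'(x₂) = x` holds -/
lemma conv_B_Bt_of_comm (hBmul : ∀ x y : H, B (x * y) = B x * B y) (hBone : B (1 : H) = 1)
    (hcc : ∀ x : H, (TensorProduct.comm K H H) (Coalgebra.comul (R := K) x)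
      = Coalgebra.comul (R := K) x)
    (hcomm : ∀ u v : H, B u * cw LinearMap.id (B ∘ₗ S) v
      = cw LinearMap.id (B ∘ₗ S) v * B u) (x : H) :
    cw (K := K) B (cw LinearMap.id (B ∘ₗ S)) x = x := by
  let r := ℛ K x
  let Φ : H ⊗[K] H →ₗ[K] H := (M) ∘ₗ TensorProduct.map (cw LinearMap.id (B ∘ₗ S)) B
  have hΦ : ∀ u v : H, Φ (u ⊗ₜ[K] v) = cw LinearMap.id (B ∘ₗ S) u * B v := by
    intro u v; simp [Φ, LinearMap.mul'_apply]
  calc cw (K := K) B (cw LinearMap.id (B ∘ₗ S)) x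
      = ∑ i ∈ r.index, B (r.left i) * cw LinearMap.id (B ∘ₗ S) (r.right i) :=
        cw_apply _ _ x r
    _ = ∑ i ∈ r.index, Φ (r.right i ⊗ₜ[K] r.left i) := by
        refine Finset.sum_congr rfl fun i _ => ?_
        rw [hΦ, hcomm]
    _ = ∑ i ∈ r.index, Φ (r.left i ⊗ₜ[K] r.right i) := (repr_swap_sum hcc r Φ).symm
    _ = cw (K := K) (cw LinearMap.id (B ∘ₗ S)) B x := by
        rw [cw_apply (cw LinearMap.id (B ∘ₗ S)) B x r]
        exact Finset.sum_congr rfl fun i _ => hΦ _ _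
    _ = x := congrArg (fun g => g x) (conv_Bt_B B hBmul hBone)

/-- T8: if `B'` is multiplicative then the ranges of `B` and `B'` commute -/
lemma comm_of_Bt_mul (hBmul : ∀ x y : H, B (x * y) = B x * B y) (hBone : B (1 : H) = 1)
    (hcc : ∀ x : H, (TensorProduct.comm K H H) (Coalgebra.comul (R := K) x)
      = Coalgebra.comul (R := K) x)
    (hmul' : ∀ x y : H, cw (K := K) LinearMap.id (B ∘ₗ S) (x * y)
      = cw LinearMap.id (B ∘ₗ S) x * cw LinearMap.id (B ∘ₗ S) y) (x y : H) :
    B x * cw LinearMap.id (B ∘ₗ S) y = cw LinearMap.id (B ∘ₗ S) y * B x := by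
  suffices hBS : ∀ z : H, (B ∘ₗ S) z * cw LinearMap.id (B ∘ₗ S) y
      = cw LinearMap.id (B ∘ₗ S) y * (B ∘ₗ S) z by
    have h := hBS (S x)
    have h2 : S (S x) = x := congrArg (fun g => g x) (S_S hcc)
    simp only [LinearMap.comp_apply, h2] at h
    exact h
  intro z
  let r := ℛ K z
  let rL : ∀ i : (H × H), Coalgebra.Repr K (r.left i) (H × H) := fun i => ℛ K (r.left i)
  let rR : ∀ i : (H × H), Coalgebra.Repr K (r.right i) (H × H) := fun i => ℛ K (r.right i)
  let ry := ℛ K y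
  have hy : cw (K := K) LinearMap.id (B ∘ₗ S) y
      = ∑ j ∈ ry.index, ry.left j * (B ∘ₗ S) (ry.right j) := by
    rw [cw_apply _ _ y ry]; simp only [LinearMap.id_coe, id_eq]
  -- Φ (u ⊗ (v ⊗ w)) = S u * (v * BS w)
  let Φ : H ⊗[K] (H ⊗[K] H) →ₗ[K] H := (M) ∘ₗ
    TensorProduct.map S ((M) ∘ₗ TensorProduct.map LinearMap.id (B ∘ₗ S))
  have hΦ : ∀ u v w : H, Φ (u ⊗ₜ[K] (v ⊗ₜ[K] w)) = S u * (v * (B ∘ₗ S) w) := by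
    intro u v w; simp [Φ, LinearMap.mul'_apply]
  -- Φ' (u ⊗ (v ⊗ w)) = S u * (v * (B'y * BS w))
  let Φ' : H ⊗[K] (H ⊗[K] H) →ₗ[K] H := (M) ∘ₗ
    TensorProduct.map S ((M) ∘ₗ TensorProduct.map LinearMap.id
      (LinearMap.mulLeft K (cw LinearMap.id (B ∘ₗ S) y) ∘ₗ (B ∘ₗ S)))
  have hΦ' : ∀ u v w : H, Φ' (u ⊗ₜ[K] (v ⊗ₜ[K] w))
      = S u * (v * (cw LinearMap.id (B ∘ₗ S) y * (B ∘ₗ S) w)) := by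
    intro u v w; simp [Φ', LinearMap.mul'_apply]
  have eq1 : ∑ i ∈ r.index, S (r.left i) * cw LinearMap.id (B ∘ₗ S) (r.right i * y)
      = (B ∘ₗ S) z * cw LinearMap.id (B ∘ₗ S) y := by
    have claim1 : ∑ i ∈ r.index, S (r.left i) * cw LinearMap.id (B ∘ₗ S) (r.right i)
        = (B ∘ₗ S) z := by
      calc ∑ i ∈ r.index, S (r.left i) * cw LinearMap.id (B ∘ₗ S) (r.right i)
          = ∑ i ∈ r.index, ∑ k ∈ (rR i).index,
              Φ (r.left i ⊗ₜ[K] ((rR i).left k ⊗ₜ[K] (rR i).right k)) := by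
            refine Finset.sum_congr rfl fun i _ => ?_
            rw [cw_apply _ _ (r.right i) (rR i), Finset.mul_sum]
            exact Finset.sum_congr rfl fun k _ => by
              rw [hΦ]; simp only [LinearMap.id_coe, id_eq]
        _ = ∑ i ∈ r.index, ∑ j ∈ (rL i).index,
              Φ ((rL i).left j ⊗ₜ[K] ((rL i).right j ⊗ₜ[K] r.right i)) :=
            (coassoc_sum z r rL rR Φ).symm
        _ = ∑ i ∈ r.index, Coalgebra.counit (R := K) (r.left i) • (B ∘ₗ S) (r.right i) := by
            refine Finset.sum_congr rfl fun i _ => ?_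
            calc ∑ j ∈ (rL i).index,
                  Φ ((rL i).left j ⊗ₜ[K] ((rL i).right j ⊗ₜ[K] r.right i))
                = (∑ j ∈ (rL i).index, S ((rL i).left j) * (rL i).right j) *
                    (B ∘ₗ S) (r.right i) := by
                  rw [Finset.sum_mul]
                  exact Finset.sum_congr rfl fun j _ => by rw [hΦ, mul_assoc]
              _ = _ := by
                  rw [HopfAlgebra.sum_antipode_mul_eq_algebraMap_counit (rL i),
                    Algebra.algebraMap_eq_smul_one, smul_mul_assoc, one_mul]
        _ = (B ∘ₗ S) z := by
            have h : ∑ i ∈ r.index, Coalgebra.counit (R := K) (r.left i) •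
                (B ∘ₗ S) (r.right i)
                = (B ∘ₗ S) (∑ i ∈ r.index,
                    Coalgebra.counit (R := K) (r.left i) • r.right i) := by
              rw [map_sum]
              exact Finset.sum_congr rfl fun i _ => (map_smul _ _ _).symm
            rw [h, counit_sum_smul z r]
    calc ∑ i ∈ r.index, S (r.left i) * cw LinearMap.id (B ∘ₗ S) (r.right i * y)
        = ∑ i ∈ r.index, S (r.left i) *
            (cw LinearMap.id (B ∘ₗ S) (r.right i) * cw LinearMap.id (B ∘ₗ S) y) := by
          exact Finset.sum_congr rfl fun i _ => by rw [hmul']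
      _ = (∑ i ∈ r.index, S (r.left i) * cw LinearMap.id (B ∘ₗ S) (r.right i)) *
            cw LinearMap.id (B ∘ₗ S) y := by
          rw [Finset.sum_mul]
          exact Finset.sum_congr rfl fun i _ => by rw [mul_assoc]
      _ = (B ∘ₗ S) z * cw LinearMap.id (B ∘ₗ S) y := by rw [claim1]
  have eq2 : ∑ i ∈ r.index, S (r.left i) * cw LinearMap.id (B ∘ₗ S) (r.right i * y)
      = cw LinearMap.id (B ∘ₗ S) y * (B ∘ₗ S) z := by
    have inner : ∀ i ∈ r.index, cw (K := K) LinearMap.id (B ∘ₗ S) (r.right i * y)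
        = ∑ k ∈ (rR i).index, (rR i).left k *
            (cw LinearMap.id (B ∘ₗ S) y * (B ∘ₗ S) ((rR i).right k)) := by
      intro i _
      have hΔ : Coalgebra.comul (R := K) (r.right i * y)
          = ∑ k ∈ (rR i).index, ∑ j ∈ ry.index,
            ((rR i).left k * ry.left j) ⊗ₜ[K] ((rR i).right k * ry.right j) := by
        rw [Bialgebra.comul_mul, ← (rR i).eq, ← ry.eq, Finset.sum_mul_sum]
        simp only [Algebra.TensorProduct.tmul_mul_tmul]
      rw [show cw (K := K) LinearMap.id (B ∘ₗ S) (r.right i * y)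
        = LinearMap.mul' K H (TensorProduct.map LinearMap.id (B ∘ₗ S)
          (Coalgebra.comul (r.right i * y))) from rfl, hΔ]
      simp only [map_sum, TensorProduct.map_tmul, LinearMap.mul'_apply,
        LinearMap.id_coe, id_eq]
      refine Finset.sum_congr rfl fun k _ => ?_
      rw [hy, Finset.sum_mul, Finset.mul_sum]
      refine Finset.sum_congr rfl fun j _ => ?_
      rw [BS_mul B hBmul, mul_assoc, ← mul_assoc (ry.left j)]
    calc ∑ i ∈ r.index, S (r.left i) * cw LinearMap.id (B ∘ₗ S) (r.right i * y)
        = ∑ i ∈ r.index, ∑ k ∈ (rR i).index,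
            Φ' (r.left i ⊗ₜ[K] ((rR i).left k ⊗ₜ[K] (rR i).right k)) := by
          refine Finset.sum_congr rfl fun i hi => ?_
          rw [inner i hi, Finset.mul_sum]
          exact Finset.sum_congr rfl fun k _ => by rw [hΦ']
      _ = ∑ i ∈ r.index, ∑ j ∈ (rL i).index,
            Φ' ((rL i).left j ⊗ₜ[K] ((rL i).right j ⊗ₜ[K] r.right i)) :=
          (coassoc_sum z r rL rR Φ').symm
      _ = ∑ i ∈ r.index, Coalgebra.counit (R := K) (r.left i) •
            (cw LinearMap.id (B ∘ₗ S) y * (B ∘ₗ S) (r.right i)) := by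
          refine Finset.sum_congr rfl fun i _ => ?_
          calc ∑ j ∈ (rL i).index,
                Φ' ((rL i).left j ⊗ₜ[K] ((rL i).right j ⊗ₜ[K] r.right i))
              = (∑ j ∈ (rL i).index, S ((rL i).left j) * (rL i).right j) *
                  (cw LinearMap.id (B ∘ₗ S) y * (B ∘ₗ S) (r.right i)) := by
                rw [Finset.sum_mul]
                exact Finset.sum_congr rfl fun j _ => by rw [hΦ', mul_assoc]
            _ = _ := by
                rw [HopfAlgebra.sum_antipode_mul_eq_algebraMap_counit (rL i),
                  Algebra.algebraMap_eq_smul_one, smul_mul_assoc, one_mul]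
      _ = cw LinearMap.id (B ∘ₗ S) y * (B ∘ₗ S) z := by
          have h : ∀ i ∈ r.index, Coalgebra.counit (R := K) (r.left i) •
              (cw LinearMap.id (B ∘ₗ S) y * (B ∘ₗ S) (r.right i))
              = cw LinearMap.id (B ∘ₗ S) y *
                (Coalgebra.counit (R := K) (r.left i) • (B ∘ₗ S) (r.right i)) := by
            intro i _; rw [mul_smul_comm]
          rw [Finset.sum_congr rfl h, ← Finset.mul_sum]
          congr 1
          have h2 : ∑ i ∈ r.index, Coalgebra.counit (R := K) (r.left i) •
              (B ∘ₗ S) (r.right i)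
              = (B ∘ₗ S) (∑ i ∈ r.index,
                  Coalgebra.counit (R := K) (r.left i) • r.right i) := by
            rw [map_sum]
            exact Finset.sum_congr rfl fun i _ => (map_smul _ _ _).symm
          rw [h2, counit_sum_smul z r]
  rw [← eq1, eq2]

end Bops

end Hopf
end MyDev19

variable {K H : Type u} [Field K] [CharZero K] [Ring H] [HopfAlgebra K H]

/-- for an idempotent Hopf endomorphism `B` and `B' = Bt B` (i.e.
`B'(x) = x₁ B(S(x₂))`), `(B, B')` is a projection homomorphism pair iff the images of `B`
and `B'` commute. -/
theorem stmt19 (B : H →ₗ[K] H) (hcc : IsCocomm K H)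
    (hBmul : ∀ x y : H, B (x * y) = B x * B y) (hBone : B (1 : H) = 1)
    (hBcomul : Coalgebra.comul ∘ₗ B = TensorProduct.map B B ∘ₗ Coalgebra.comul)
    (hBcounit : Coalgebra.counit ∘ₗ B = Coalgebra.counit)
    (hBidem : B ∘ₗ B = B) :
    ((∀ x y : H, Bt B (x * y) = Bt B x * Bt B y) ∧ Bt B (1 : H) = 1 ∧
      (Coalgebra.comul ∘ₗ Bt B = TensorProduct.map (Bt B) (Bt B) ∘ₗ Coalgebra.comul) ∧
      (Coalgebra.counit ∘ₗ Bt B = Coalgebra.counit) ∧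
      Bt B ∘ₗ Bt B = Bt B ∧
      (∀ x : H, conv B (Bt B) x = x)) ↔
    (∀ x y : H, B x * Bt B y = Bt B y * B x) := by
  have hBt : Bt B = cw (K := K) LinearMap.id (B ∘ₗ HopfAlgebra.antipode K) := rfl
  have hcc' : ∀ x : H, (TensorProduct.comm K H H) (Coalgebra.comul (R := K) x)
      = Coalgebra.comul (R := K) x := hcc
  constructor
  · rintro ⟨h1, -, -, -, -, -⟩
    intro x y
    rw [hBt]
    refine comm_of_Bt_mul B hBmul hBone hcc' ?_ x y
    intro u v
    have := h1 u v
    rwa [hBt] at this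
  · intro hcm
    have hcomm : ∀ u v : H, B u * cw LinearMap.id (B ∘ₗ HopfAlgebra.antipode K) v
        = cw LinearMap.id (B ∘ₗ HopfAlgebra.antipode K) v * B u := by
      intro u v
      have := hcm u v
      rwa [hBt] at this
    refine ⟨?_, ?_, ?_, ?_, ?_, ?_⟩
    · intro x y
      rw [hBt]
      exact Bt_mul_of_comm B hBmul hcomm x y
    · rw [hBt]
      exact Bt_one B hBone
    · rw [hBt]
      exact comul_Bt B hBcomul hcc'
    · rw [hBt]
      exact counit_Bt B hBcounit
    · rw [hBt]
      exact Bt_idem B hBmul hBcomul hBcounit hBone hBidem hcc'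
    · intro x
      have hconv : conv B (Bt B) = cw (K := K) B (cw LinearMap.id (B ∘ₗ HopfAlgebra.antipode K)) :=
        rfl
      rw [hconv]
      exact conv_B_Bt_of_comm B hBmul hBone hcc' hcomm x

end
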